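/- arXiv:2404.19645 — 5 statements merged into one kernel-verified Lean document; each statement's English description precedes it below -/
import Mathlib

section
/- Let f(t,s) = f̃(t)Θ(t−s) where f̃ is continuous on [a,b] and Θ is the Heaviside function, and define the ★-product by (g ★ h)(t,s) = ∫ₐᵇ g(t,τ)h(τ,s) dτ. If F̃ is a primitive of f̃, then for every n ≥ 1 the n-th ★-power satisfies f^{★n}(t,s) = f̃(t)·(F̃(t) − F̃(s))^{n−1}/(n−1)! · Θ(t−s). -/
open MeasureTheory Set

/-- Heaviside function: `Θ x = 1` if `x ≥ 0`, else `0`. -/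
noncomputable def Heaviside (x : ℝ) : ℝ := if 0 ≤ x then 1 else 0

/-- The `★`-product of two kernels on `[a,b]²`:
`(g ★ h)(t,s) = ∫_a^b g(t,τ) h(τ,s) dτ`. -/
noncomputable def starProd (a b : ℝ) (g h : ℝ → ℝ → ℂ) : ℝ → ℝ → ℂ :=
  fun t s => ∫ τ in a..b, g t τ * h τ s

/-- `starPow a b f n` is the `(n+1)`-st `★`-power `f^{★(n+1)} = f ★ ⋯ ★ f`
(`n+1` factors). -/
noncomputable def starPow (a b : ℝ) (f : ℝ → ℝ → ℂ) : ℕ → ℝ → ℝ → ℂ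
  | 0 => f
  | n + 1 => starProd a b f (starPow a b f n)

/-- If `f(t,s) = f̃(t) Θ(t-s)` with `f̃` continuous on `[a,b]` and `F̃` a primitive of
`f̃`, then `f^{★n}(t,s) = f̃(t) (F̃(t) - F̃(s))^{n-1}/(n-1)! Θ(t-s)` for all `n ≥ 1`
(here `starPow a b f n = f^{★(n+1)}`). -/
theorem starPow_eq (a b : ℝ) (hab : a ≤ b) (ft Ft : ℝ → ℂ)
    (hcont : ContinuousOn ft (Icc a b))
    (hprim : ∀ t ∈ Icc a b, HasDerivWithinAt Ft (ft t) (Icc a b) t)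
    (f : ℝ → ℝ → ℂ) (hf : ∀ t s, f t s = ft t * (Heaviside (t - s) : ℝ)) :
    ∀ n : ℕ, ∀ t ∈ Icc a b, ∀ s ∈ Icc a b,
      starPow a b f n t s
        = ft t * (Ft t - Ft s) ^ n / (Nat.factorial n : ℂ) * (Heaviside (t - s) : ℝ) := by
  have hFt : ContinuousOn Ft (Icc a b) := fun x hx => (hprim x hx).continuousWithinAt
  intro n
  induction n with
  | zero =>
    intro t ht s hs
    simp [starPow, hf]
  | succ n ih =>
    intro t ht s hs
    show (∫ τ in a..b, f t τ * starPow a b f n τ s) = _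
    by_cases hst : s ≤ t
    · -- main case
      have hsub : Icc s t ⊆ Icc a b := Icc_subset_Icc hs.1 ht.2
      have hsub : Icc s t ⊆ Icc a b := Icc_subset_Icc hs.1 ht.2
      set G : ℝ → ℂ := fun τ => ft t * (ft τ * (Ft τ - Ft s) ^ n / (n.factorial : ℂ)) with hGdef
      have hEq : EqOn (fun τ => f t τ * starPow a b f n τ s)
          (fun τ => Set.indicator (Icc s t) G τ) (uIcc a b) := by
        intro τ hτ
        rw [uIcc_of_le hab] at hτ
        show f t τ * starPow a b f n τ s = Set.indicator (Icc s t) G τ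
        rw [hf, ih τ hτ s hs]
        by_cases h1 : τ ≤ t <;> by_cases h2 : s ≤ τ <;>
          simp [Heaviside, sub_nonneg, h1, h2, Set.indicator_apply, Set.mem_Icc, hGdef]
      rw [intervalIntegral.integral_congr hEq, intervalIntegral.integral_of_le hab,
        MeasureTheory.setIntegral_indicator measurableSet_Icc]
      have hsets : (Ioc a b ∩ Icc s t : Set ℝ) =ᵐ[volume] (Ioc s t : Set ℝ) := by
        rw [MeasureTheory.ae_eq_set]
        constructor
        · refine measure_mono_null (fun x hx => ?_) (measure_singleton s)
          rcases hx with ⟨⟨hx1, hx2⟩, hx3⟩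
          rcases hx1 with ⟨hxa, hxb⟩
          simp only [Set.mem_singleton_iff]
          by_contra hne
          exact hx3 ⟨lt_of_le_of_ne hx2.1 (Ne.symm hne), hx2.2⟩
        · have : Ioc s t \ (Ioc a b ∩ Icc s t) = ∅ := by
            rw [Set.diff_eq_empty]
            intro x hx
            exact ⟨⟨lt_of_le_of_lt hs.1 hx.1, le_trans hx.2 ht.2⟩, le_of_lt hx.1, hx.2⟩
          rw [this]; simp
      rw [MeasureTheory.setIntegral_congr_set hsets, ← intervalIntegral.integral_of_le hst]
      have hFne : ((n.factorial : ℂ)) ≠ 0 := Nat.cast_ne_zero.2 n.factorial_ne_zero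
      have hFne' : (((n+1).factorial : ℂ)) ≠ 0 := Nat.cast_ne_zero.2 (n+1).factorial_ne_zero
      have hFTC : (∫ τ in s..t, ft τ * (Ft τ - Ft s) ^ n / (n.factorial : ℂ))
          = (Ft t - Ft s) ^ (n+1) / ((n+1).factorial : ℂ) := by
        have hc : ContinuousOn (fun τ => (Ft τ - Ft s) ^ (n+1) / (((n+1).factorial : ℕ) : ℂ)) (Icc s t) :=
          (((hFt.mono hsub).sub continuousOn_const).pow _).div_const _
        have hint : IntervalIntegrable (fun τ => ft τ * (Ft τ - Ft s) ^ n / (n.factorial : ℂ)) volume s t := by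
          apply ContinuousOn.intervalIntegrable
          rw [uIcc_of_le hst]
          exact ((hcont.mono hsub).mul (((hFt.mono hsub).sub continuousOn_const).pow n)).div_const _
        have hderiv : ∀ x ∈ Ioo s t,
            HasDerivWithinAt (fun τ => (Ft τ - Ft s) ^ (n+1) / (((n+1).factorial : ℕ) : ℂ))
              (ft x * (Ft x - Ft s) ^ n / (n.factorial : ℂ)) (Ioi x) x := by
          intro x hx
          have hxab : x ∈ Ioo a b := ⟨lt_of_le_of_lt hs.1 hx.1, lt_of_lt_of_le hx.2 ht.2⟩
          have hFx : HasDerivAt Ft (ft x) x :=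
            (hprim x (Ioo_subset_Icc_self hxab)).hasDerivAt (Icc_mem_nhds hxab.1 hxab.2)
          have h1 : HasDerivAt (fun τ => (Ft τ - Ft s) ^ (n+1) / (((n+1).factorial : ℕ) : ℂ))
              ((((n+1 : ℕ) : ℂ) * (Ft x - Ft s) ^ n * ft x) / (((n+1).factorial : ℕ) : ℂ)) x := by
            have hp := (HasDerivAt.comp x (hasDerivAt_pow (n+1) (Ft x - Ft s)) (hFx.sub_const (Ft s))).div_const (((n+1).factorial : ℕ) : ℂ)
            simpa [Function.comp, mul_comm, mul_assoc, mul_left_comm] using hp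
          have heq : (((n+1 : ℕ) : ℂ) * (Ft x - Ft s) ^ n * ft x) / (((n+1).factorial : ℕ) : ℂ)
              = ft x * (Ft x - Ft s) ^ n / (n.factorial : ℂ) := by
            have h2 : (((n+1).factorial : ℕ) : ℂ) = ((n:ℂ)+1) * (n.factorial : ℂ) := by
              push_cast [Nat.factorial_succ]; ring
            rw [h2]
            have hne : ((n:ℂ)+1) ≠ 0 := Nat.cast_add_one_ne_zero n
            field_simp
            push_cast
            ring
          rw [heq] at h1
          exact h1.hasDerivWithinAt
        have := intervalIntegral.integral_eq_sub_of_hasDeriv_right_of_le hst hc hderiv hint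
        rw [this]
        simp
      rw [intervalIntegral.integral_const_mul, hFTC]
      have hθ : Heaviside (t - s) = 1 := by simp [Heaviside, sub_nonneg, hst]
      rw [hθ]
      push_cast
      ring
    · -- t < s : everything vanishes
      push_neg at hst
      have hEq : EqOn (fun τ => f t τ * starPow a b f n τ s) (fun _ => (0:ℂ)) (uIcc a b) := by
        intro τ hτ
        rw [uIcc_of_le hab] at hτ
        show f t τ * starPow a b f n τ s = 0
        rw [hf, ih τ hτ s hs]
        by_cases h1 : τ ≤ t
        · have h2 : ¬ s ≤ τ := by linarith
          simp [Heaviside, sub_nonneg, h1, h2]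
        · simp [Heaviside, sub_nonneg, h1]
      rw [intervalIntegral.integral_congr hEq]
      have : ¬ (0:ℝ) ≤ t - s := by linarith
      simp [Heaviside, this]
end

section
/- With f(t,s) = f̃(t)Θ(t−s) as above and F̃ a primitive of f̃, for every n ≥ 1 one has (Θ ★ f^{★n})(t,s) = (F̃(t) − F̃(s))ⁿ/n! · Θ(t−s), where Θ(t,s) := Θ(t−s) is viewed as a kernel. -/
open MeasureTheory Set

/-- The Heaviside kernel `Θ(t,s) := Θ(t-s)`. -/
noncomputable def thetaK : ℝ → ℝ → ℂ := fun t s => (Heaviside (t - s) : ℝ)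

/-- Key integral lemma. -/
lemma key_int (a b : ℝ) (hab : a ≤ b) (ft Ft : ℝ → ℂ)
    (hcont : ContinuousOn ft (Icc a b))
    (hFt : ContinuousOn Ft (Icc a b))
    (hprim : ∀ t ∈ Icc a b, HasDerivWithinAt Ft (ft t) (Icc a b) t)
    (n : ℕ) (t : ℝ) (ht : t ∈ Icc a b) (s : ℝ) (hs : s ∈ Icc a b) :
    (∫ τ in a..b, (Heaviside (t - τ) : ℂ) *
        (ft τ * ((Ft τ - Ft s) ^ n / (Nat.factorial n : ℂ)) * (Heaviside (τ - s) : ℝ)))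
      = (Ft t - Ft s) ^ (n + 1) / (Nat.factorial (n + 1) : ℂ) * (Heaviside (t - s) : ℝ) := by
  set g : ℝ → ℂ := fun τ => ft τ * ((Ft τ - Ft s) ^ n / (Nat.factorial n : ℂ)) with hg
  by_cases hst : s ≤ t
  · -- integrand equals indicator of Icc s t applied to g
    have hind : ∀ τ : ℝ, (Heaviside (t - τ) : ℂ) * (g τ * (Heaviside (τ - s) : ℝ))
        = Set.indicator (Icc s t) g τ := by
      intro τ
      by_cases h1 : τ ≤ t <;> by_cases h2 : s ≤ τ <;>
        simp [Heaviside, Set.indicator, mem_Icc, sub_nonneg, h1, h2]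
    have hsub : Icc s t ⊆ Icc a b := Icc_subset_Icc hs.1 ht.2
    have key2 : (∫ τ in a..b, Set.indicator (Icc s t) g τ) = ∫ τ in s..t, g τ := by
      rw [intervalIntegral.integral_of_le hab,
        intervalIntegral.integral_of_le hst,
        MeasureTheory.integral_indicator measurableSet_Icc,
        Measure.restrict_restrict measurableSet_Icc]
      apply MeasureTheory.setIntegral_congr_set
      have h1 : (Icc s t : Set ℝ) =ᵐ[volume] Ioc s t := Ioc_ae_eq_Icc.symm
      have h2 : (Ioc s t ∩ Ioc a b : Set ℝ) = Ioc s t :=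
        inter_eq_left.2 fun x hx => ⟨lt_of_le_of_lt hs.1 hx.1, hx.2.trans ht.2⟩
      have h3 := h1.inter (Filter.EventuallyEq.refl (ae volume) (Ioc a b : Set ℝ))
      rw [h2] at h3
      exact h3
    have hFTC : (∫ τ in s..t, g τ)
        = (Ft t - Ft s) ^ (n + 1) / (Nat.factorial (n + 1) : ℂ) := by
      have hG : ∀ x ∈ Ioo s t, HasDerivWithinAt
          (fun τ => (Ft τ - Ft s) ^ (n + 1) / (Nat.factorial (n + 1) : ℂ)) (g x) (Ioi x) x := by
        intro x hx
        have hxab : x ∈ Ioo a b := ⟨lt_of_le_of_lt hs.1 hx.1, lt_of_lt_of_le hx.2 ht.2⟩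
        have hd : HasDerivAt Ft (ft x) x :=
          (hprim x (Ioo_subset_Icc_self hxab)).hasDerivAt (Icc_mem_nhds hxab.1 hxab.2)
        have hp : HasDerivAt (fun y : ℂ => y ^ (n + 1))
            (((n : ℂ) + 1) * (Ft x - Ft s) ^ n) (Ft x - Ft s) := by
          simpa using hasDerivAt_pow (n + 1) (Ft x - Ft s)
        have h1 : HasDerivAt (fun τ => (Ft τ - Ft s) ^ (n + 1) / (Nat.factorial (n + 1) : ℂ))
            (((n:ℂ) + 1) * (Ft x - Ft s) ^ n * ft x / (Nat.factorial (n + 1) : ℂ)) x := by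
          have := (HasDerivAt.comp x hp (hd.sub_const (Ft s))).div_const (Nat.factorial (n + 1) : ℂ)
          simpa [Function.comp] using this
        have heq : ((n:ℂ) + 1) * (Ft x - Ft s) ^ n * ft x / (Nat.factorial (n + 1) : ℂ) = g x := by
          have hn : ((Nat.factorial n : ℂ)) ≠ 0 := Nat.cast_ne_zero.2 (Nat.factorial_ne_zero n)
          have hn1 : ((n:ℂ) + 1) ≠ 0 := Nat.cast_add_one_ne_zero n
          rw [hg]
          push_cast [Nat.factorial_succ]
          field_simp
        rw [← heq] at *
        exact h1.hasDerivWithinAt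
      have hcontG : ContinuousOn
          (fun τ => (Ft τ - Ft s) ^ (n + 1) / (Nat.factorial (n + 1) : ℂ)) (Icc s t) :=
        (((hFt.mono hsub).sub continuousOn_const).pow _).div_const _
      have hgint : IntervalIntegrable g volume s t := by
        apply ContinuousOn.intervalIntegrable
        rw [uIcc_of_le hst]
        exact (hcont.mono hsub).mul
          ((((hFt.mono hsub).sub continuousOn_const).pow n).div_const (Nat.factorial n : ℂ))
      rw [intervalIntegral.integral_eq_sub_of_hasDeriv_right_of_le hst hcontG hG hgint]
      ring
    have hth : (Heaviside (t - s) : ℂ) = 1 := by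
      simp [Heaviside, sub_nonneg, hst]
    rw [show (fun τ => (Heaviside (t - τ) : ℂ) *
        (ft τ * ((Ft τ - Ft s) ^ n / (Nat.factorial n : ℂ)) * (Heaviside (τ - s) : ℝ)))
        = fun τ => Set.indicator (Icc s t) g τ from funext hind]
    rw [key2, hFTC, hth, mul_one]
  · push_neg at hst
    have h0 : ∀ τ : ℝ, (Heaviside (t - τ) : ℂ) * (g τ * (Heaviside (τ - s) : ℝ)) = 0 := by
      intro τ
      rcases le_or_gt τ t with h1 | h1
      · have h2 : ¬ (0:ℝ) ≤ τ - s := by linarith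
        simp [Heaviside, h2]
      · have h2 : ¬ (0:ℝ) ≤ t - τ := by linarith
        simp [Heaviside, h2]
    have hth : (Heaviside (t - s) : ℝ) = 0 := by
      have : ¬ (0:ℝ) ≤ t - s := by linarith
      simp [Heaviside, this]
    rw [show (fun τ => (Heaviside (t - τ) : ℂ) *
        (ft τ * ((Ft τ - Ft s) ^ n / (Nat.factorial n : ℂ)) * (Heaviside (τ - s) : ℝ)))
        = fun _ => (0:ℂ) from funext h0]
    simp [hth]

lemma starPow_eq_aux (a b : ℝ) (hab : a ≤ b) (ft Ft : ℝ → ℂ)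
    (hcont : ContinuousOn ft (Icc a b))
    (hprim : ∀ t ∈ Icc a b, HasDerivWithinAt Ft (ft t) (Icc a b) t)
    (f : ℝ → ℝ → ℂ) (hf : ∀ t s, f t s = ft t * (Heaviside (t - s) : ℝ)) :
    ∀ n : ℕ, ∀ t ∈ Icc a b, ∀ s ∈ Icc a b,
      starPow a b f n t s
        = ft t * ((Ft t - Ft s) ^ n / (Nat.factorial n : ℂ)) * (Heaviside (t - s) : ℝ) := by
  have hFt : ContinuousOn Ft (Icc a b) := fun x hx => (hprim x hx).continuousWithinAt
  intro n
  induction n with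
  | zero =>
    intro t _ s _
    simp [starPow, hf t s]
  | succ n ih =>
    intro t ht s hs
    have hEq : Set.EqOn (fun τ => f t τ * starPow a b f n τ s)
        (fun τ => ft t * ((Heaviside (t - τ) : ℂ) *
          (ft τ * ((Ft τ - Ft s) ^ n / (Nat.factorial n : ℂ)) * (Heaviside (τ - s) : ℝ))))
        (Set.uIcc a b) := by
      intro τ hτ
      rw [uIcc_of_le hab] at hτ
      simp only [hf t τ, ih τ hτ s hs]
      ring
    show starProd a b f (starPow a b f n) t s = _
    rw [starProd, intervalIntegral.integral_congr hEq,
      intervalIntegral.integral_const_mul,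
      key_int a b hab ft Ft hcont hFt hprim n t ht s hs]
    ring

/-- With `f(t,s) = f̃(t)Θ(t-s)` and `F̃` a primitive of `f̃`, for every `n ≥ 1`,
`(Θ ★ f^{★n})(t,s) = (F̃(t) - F̃(s))^n / n! · Θ(t-s)`
(here `starPow a b f n = f^{★(n+1)}`). -/
theorem theta_starPow_eq (a b : ℝ) (hab : a ≤ b) (ft Ft : ℝ → ℂ)
    (hcont : ContinuousOn ft (Icc a b))
    (hprim : ∀ t ∈ Icc a b, HasDerivWithinAt Ft (ft t) (Icc a b) t)
    (f : ℝ → ℝ → ℂ) (hf : ∀ t s, f t s = ft t * (Heaviside (t - s) : ℝ)) :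
    ∀ n : ℕ, ∀ t ∈ Icc a b, ∀ s ∈ Icc a b,
      starProd a b thetaK (starPow a b f n) t s
        = (Ft t - Ft s) ^ (n + 1) / (Nat.factorial (n + 1) : ℂ)
            * (Heaviside (t - s) : ℝ) := by
  have hFt : ContinuousOn Ft (Icc a b) := fun x hx => (hprim x hx).continuousWithinAt
  intro n t ht s hs
  have hEq : Set.EqOn (fun τ => thetaK t τ * starPow a b f n τ s)
      (fun τ => (Heaviside (t - τ) : ℂ) *
        (ft τ * ((Ft τ - Ft s) ^ n / (Nat.factorial n : ℂ)) * (Heaviside (τ - s) : ℝ)))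
      (Set.uIcc a b) := by
    intro τ hτ
    rw [uIcc_of_le hab] at hτ
    simp only [thetaK, starPow_eq_aux a b hab ft Ft hcont hprim f hf n τ hτ s hs]
  rw [starProd, intervalIntegral.integral_congr hEq,
    key_int a b hab ft Ft hcont hFt hprim n t ht s hs]
end

section
/- For continuous f̃ : [a,b] → ℂ with primitive F̃, the series ∑_{n=1}^∞ (Θ ★ f^{★n})(t,s) converges for all (t,s) and Θ(t−s) + ∑_{n=1}^∞ (Θ ★ f^{★n})(t,s) = exp(F̃(t) − F̃(s))·Θ(t−s). -/
open MeasureTheory Set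

theorem key_integral (a b s t : ℝ) (g : ℝ → ℂ) (has : a ≤ s) (hst : s ≤ t) (htb : t ≤ b) :
    (∫ τ in a..b, ((Heaviside (t - τ) : ℝ) : ℂ) * ((Heaviside (τ - s) : ℝ) : ℂ) * g τ)
      = ∫ τ in s..t, g τ := by
  have h1 : ∀ τ, ((Heaviside (t - τ):ℝ):ℂ) * ((Heaviside (τ - s):ℝ):ℂ) * g τ
      = (Icc s t).indicator g τ := by
    intro τ
    unfold Heaviside
    by_cases h1 : τ ≤ t <;> by_cases h2 : s ≤ τ <;>
      simp [Set.indicator, sub_nonneg, h1, h2, Set.mem_Icc]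
  simp only [h1]
  rw [intervalIntegral.integral_of_le (has.trans (hst.trans htb)),
    intervalIntegral.integral_of_le hst,
    MeasureTheory.setIntegral_indicator measurableSet_Icc]
  apply MeasureTheory.setIntegral_congr_set
  exact ((show (Ioc a b ∩ Icc s t : Set ℝ) =ᵐ[volume] (Ioc a b ∩ Ioc s t : Set ℝ) from
        (Filter.EventuallyEq.refl _ _).inter
          (MeasureTheory.Ioc_ae_eq_Icc (μ := volume) (a := s) (b := t)).symm)).trans
    (Filter.EventuallyEq.of_eq (show (Ioc a b ∩ Ioc s t : Set ℝ) = Ioc s t by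
        rw [Set.inter_eq_right]
        intro x hx; exact ⟨lt_of_le_of_lt has hx.1, hx.2.trans htb⟩))

theorem ftc_pow (a b : ℝ) (ft Ft : ℝ → ℂ)
    (hcont : ContinuousOn ft (Icc a b))
    (hprim : ∀ t ∈ Icc a b, HasDerivWithinAt Ft (ft t) (Icc a b) t)
    (n : ℕ) (s t : ℝ) (hs : s ∈ Icc a b) (ht : t ∈ Icc a b) (hst : s ≤ t) :
    ∫ τ in s..t, ft τ * (Ft τ - Ft s) ^ n = (Ft t - Ft s) ^ (n + 1) / (n + 1) := by
  have hFc : ContinuousOn Ft (Icc a b) := fun x hx => (hprim x hx).continuousWithinAt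
  have hsub : Icc s t ⊆ Icc a b := Icc_subset_Icc hs.1 ht.2
  have hGc : ContinuousOn (fun τ => (Ft τ - Ft s) ^ (n + 1) / (n + 1)) (Icc s t) :=
    (((hFc.mono hsub).sub continuousOn_const).pow _).div_const _
  have hderiv : ∀ x ∈ Ioo s t,
      HasDerivWithinAt (fun τ => (Ft τ - Ft s) ^ (n + 1) / (n + 1))
        (ft x * (Ft x - Ft s) ^ n) (Ioi x) x := by
    intro x hx
    have hx' : x ∈ Ioo a b := ⟨lt_of_le_of_lt hs.1 hx.1, lt_of_lt_of_le hx.2 ht.2⟩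
    have hF : HasDerivAt (fun τ => Ft τ - Ft s) (ft x) x :=
      ((hprim x (Ioo_subset_Icc_self hx')).hasDerivAt
        (Icc_mem_nhds hx'.1 hx'.2)).sub_const (Ft s)
    have h1 : HasDerivAt (fun τ => (Ft τ - Ft s) ^ (n + 1) / (n + 1))
        ((((n + 1 : ℕ) : ℂ) * (Ft x - Ft s) ^ n * ft x) / ((n : ℂ) + 1)) x := by
      have hp := (hasDerivAt_pow (n + 1) (Ft x - Ft s)).comp x hF
      simpa [Function.comp, mul_comm] using hp.div_const ((n : ℂ) + 1)
    have h2 : (((n + 1 : ℕ) : ℂ) * (Ft x - Ft s) ^ n * ft x) / ((n : ℂ) + 1)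
        = ft x * (Ft x - Ft s) ^ n := by
      have hne : ((n : ℂ) + 1) ≠ 0 := Nat.cast_add_one_ne_zero n
      push_cast
      field_simp
    rw [h2] at h1
    exact h1.hasDerivWithinAt
  have hint : IntervalIntegrable (fun τ => ft τ * (Ft τ - Ft s) ^ n) volume s t :=
    (((hcont.mono hsub).mul
      (((hFc.mono hsub).sub continuousOn_const).pow n))).intervalIntegrable_of_Icc hst
  rw [intervalIntegral.integral_eq_sub_of_hasDeriv_right_of_le hst hGc hderiv hint]
  rw [sub_self, zero_pow (Nat.succ_ne_zero n), zero_div, sub_zero]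

theorem theta_int (a b : ℝ) (ft Ft : ℝ → ℂ)
    (hcont : ContinuousOn ft (Icc a b))
    (hprim : ∀ t ∈ Icc a b, HasDerivWithinAt Ft (ft t) (Icc a b) t)
    (n : ℕ) (t s : ℝ) (ht : t ∈ Icc a b) (hs : s ∈ Icc a b) :
    (∫ τ in a..b, ((Heaviside (t - τ) : ℝ) : ℂ) *
        (ft τ * ((Ft τ - Ft s) ^ n / (n.factorial : ℂ)) * ((Heaviside (τ - s) : ℝ) : ℂ)))
      = (Ft t - Ft s) ^ (n + 1) / ((n + 1).factorial : ℂ) * ((Heaviside (t - s) : ℝ) : ℂ) := by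
  rcases le_or_gt s t with hst | hts
  · have hre : ∀ τ, ((Heaviside (t - τ) : ℝ) : ℂ) *
        (ft τ * ((Ft τ - Ft s) ^ n / (n.factorial : ℂ)) * ((Heaviside (τ - s) : ℝ) : ℂ))
        = ((Heaviside (t - τ) : ℝ) : ℂ) * ((Heaviside (τ - s) : ℝ) : ℂ) *
          ((ft τ * (Ft τ - Ft s) ^ n) / (n.factorial : ℂ)) := by
      intro τ; ring
    simp only [hre]
    rw [key_integral a b s t _ hs.1 hst ht.2, intervalIntegral.integral_div,
      ftc_pow a b ft Ft hcont hprim n s t hs ht hst]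
    have hθ : Heaviside (t - s) = 1 := if_pos (by linarith)
    rw [hθ]
    have h1 : ((n : ℂ) + 1) ≠ 0 := Nat.cast_add_one_ne_zero n
    have h2 : ((n.factorial : ℂ)) ≠ 0 := Nat.cast_ne_zero.2 n.factorial_ne_zero
    rw [Nat.factorial_succ]
    push_cast
    field_simp
  · have hre : ∀ τ, ((Heaviside (t - τ) : ℝ) : ℂ) *
        (ft τ * ((Ft τ - Ft s) ^ n / (n.factorial : ℂ)) * ((Heaviside (τ - s) : ℝ) : ℂ))
        = 0 := by
      intro τ
      rcases le_or_gt τ t with h | h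
      · have : Heaviside (τ - s) = 0 := if_neg (by simp; linarith)
        rw [this]; push_cast; ring
      · have : Heaviside (t - τ) = 0 := if_neg (by simp; linarith)
        rw [this]; push_cast; ring
    simp only [hre]
    have hθ : Heaviside (t - s) = 0 := if_neg (by simp; linarith)
    simp [hθ]

theorem pow_formula (a b : ℝ) (hab : a ≤ b) (ft Ft : ℝ → ℂ)
    (hcont : ContinuousOn ft (Icc a b))
    (hprim : ∀ t ∈ Icc a b, HasDerivWithinAt Ft (ft t) (Icc a b) t)
    (f : ℝ → ℝ → ℂ) (hf : ∀ t s, f t s = ft t * (Heaviside (t - s) : ℝ)) :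
    ∀ n : ℕ, ∀ t ∈ Icc a b, ∀ s ∈ Icc a b,
      starPow a b f n t s
        = ft t * ((Ft t - Ft s) ^ n / (n.factorial : ℂ)) * ((Heaviside (t - s) : ℝ) : ℂ) := by
  intro n
  induction n with
  | zero =>
    intro t _ s _
    rw [starPow, hf]
    simp
  | succ n ih =>
    intro t ht s hs
    have hcongr : ∀ τ ∈ uIcc a b,
        f t τ * starPow a b f n τ s
          = ft t * (((Heaviside (t - τ) : ℝ) : ℂ) *
              (ft τ * ((Ft τ - Ft s) ^ n / (n.factorial : ℂ)) *
                ((Heaviside (τ - s) : ℝ) : ℂ))) := by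
      intro τ hτ
      rw [uIcc_of_le hab] at hτ
      rw [hf, ih τ hτ s hs]
      ring
    show starProd a b f (starPow a b f n) t s = _
    unfold starProd
    rw [intervalIntegral.integral_congr hcongr, intervalIntegral.integral_const_mul,
      theta_int a b ft Ft hcont hprim n t s ht hs]
    ring

/-- For continuous `f̃` with primitive `F̃`, the series `∑_{n≥1} (Θ ★ f^{★n})(t,s)`
converges and `Θ(t-s) + ∑_{n≥1} (Θ ★ f^{★n})(t,s) = exp(F̃(t) - F̃(s)) Θ(t-s)`,
i.e. `Θ ★ R^★(f)` is the exponential kernel (here `starPow a b f n = f^{★(n+1)}`). -/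
theorem theta_starResolvent_eq_exp (a b : ℝ) (hab : a ≤ b) (ft Ft : ℝ → ℂ)
    (hcont : ContinuousOn ft (Icc a b))
    (hprim : ∀ t ∈ Icc a b, HasDerivWithinAt Ft (ft t) (Icc a b) t)
    (f : ℝ → ℝ → ℂ) (hf : ∀ t s, f t s = ft t * (Heaviside (t - s) : ℝ)) :
    ∀ t ∈ Icc a b, ∀ s ∈ Icc a b,
      (Summable fun n : ℕ => starProd a b thetaK (starPow a b f n) t s) ∧
      (Heaviside (t - s) : ℝ) + ∑' n : ℕ, starProd a b thetaK (starPow a b f n) t s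
        = Complex.exp (Ft t - Ft s) * (Heaviside (t - s) : ℝ) := by
  intro t ht s hs
  have hterm : ∀ n : ℕ, starProd a b thetaK (starPow a b f n) t s
      = (Ft t - Ft s) ^ (n + 1) / ((n + 1).factorial : ℂ) * ((Heaviside (t - s) : ℝ) : ℂ) := by
    intro n
    have hcongr : ∀ τ ∈ uIcc a b,
        thetaK t τ * starPow a b f n τ s
          = ((Heaviside (t - τ) : ℝ) : ℂ) *
              (ft τ * ((Ft τ - Ft s) ^ n / (n.factorial : ℂ)) *
                ((Heaviside (τ - s) : ℝ) : ℂ)) := by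
      intro τ hτ
      rw [uIcc_of_le hab] at hτ
      rw [thetaK, pow_formula a b hab ft Ft hcont hprim f hf n τ hτ s hs]
    unfold starProd
    rw [intervalIntegral.integral_congr hcongr,
      theta_int a b ft Ft hcont hprim n t s ht hs]
  set z : ℂ := Ft t - Ft s with hz
  have hsum0 : Summable fun n : ℕ => z ^ n / (n.factorial : ℂ) :=
    NormedSpace.expSeries_div_summable z
  have hsum1 : Summable fun n : ℕ => z ^ (n + 1) / ((n + 1).factorial : ℂ) :=
    hsum0.comp_injective Nat.succ_injective
  have hsum : Summable fun n : ℕ =>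
      z ^ (n + 1) / ((n + 1).factorial : ℂ) * ((Heaviside (t - s) : ℝ) : ℂ) :=
    hsum1.mul_right _
  have hsum' : Summable fun n : ℕ => starProd a b thetaK (starPow a b f n) t s := by
    apply hsum.congr; intro n; exact (hterm n).symm
  refine ⟨hsum', ?_⟩
  have htsum : ∑' n : ℕ, starProd a b thetaK (starPow a b f n) t s
      = (∑' n : ℕ, z ^ (n + 1) / ((n + 1).factorial : ℂ)) * ((Heaviside (t - s) : ℝ) : ℂ) := by
    rw [← tsum_mul_right]
    exact tsum_congr hterm
  rw [htsum]
  have hexp : Complex.exp z = ∑' n : ℕ, z ^ n / (n.factorial : ℂ) := by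
    rw [Complex.exp_eq_exp_ℂ, NormedSpace.exp_eq_tsum_div]
  have hshift : ∑' n : ℕ, z ^ n / (n.factorial : ℂ)
      = 1 + ∑' n : ℕ, z ^ (n + 1) / ((n + 1).factorial : ℂ) := by
    rw [hsum0.tsum_eq_zero_add]
    simp
  rcases le_or_gt s t with hst | hts
  · have hθ : Heaviside (t - s) = 1 := if_pos (by linarith)
    rw [hθ]
    push_cast
    rw [mul_one, mul_one, hexp, hshift]
  · have hθ : Heaviside (t - s) = 0 := if_neg (by simp; linarith)
    rw [hθ]
    push_cast
    ring
end

section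
/- Let ũ solve ũ′(t) = f̃(t)ũ(t) on [a,b] with ũ(a) = v ∈ ℂ, where f̃ is continuous. Then ũ(t) = exp(F̃(t) − F̃(a))·v where F̃ is the primitive of f̃ with F̃(a) = 0, and equivalently ũ(t) = (Θ(t−a) + ∑_{n≥1}(Θ ★ f^{★n})(t,a))·v. -/
open MeasureTheory Set

lemma heaviside_mul_eq_indicator (t : ℝ) (g : ℝ → ℂ) (τ : ℝ) :
    ((Heaviside (t - τ) : ℝ) : ℂ) * g τ = Set.indicator {x | x ≤ t} g τ := by
  simp only [Heaviside, Set.indicator_apply, Set.mem_setOf_eq, sub_nonneg]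
  split_ifs <;> simp

lemma heaviside_integral (a b t : ℝ) (ht : t ∈ Icc a b) (g : ℝ → ℂ) :
    ∫ τ in a..b, ((Heaviside (t - τ) : ℝ) : ℂ) * g τ = ∫ τ in a..t, g τ := by
  simp_rw [heaviside_mul_eq_indicator t g]
  exact intervalIntegral.integral_indicator ht

/-- If `ũ` solves `ũ' = f̃ ũ` on `[a,b]` with `ũ(a) = v`, then
`ũ(t) = exp(F̃(t) - F̃(a)) v` where `F̃` is the primitive of `f̃` with `F̃(a) = 0`, and
equivalently `ũ(t) = (Θ(t-a) + ∑_{n≥1} (Θ ★ f^{★n})(t,a)) v`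
(here `starPow a b f n = f^{★(n+1)}`). -/
theorem ode_solution_eq_starResolvent (a b : ℝ) (hab : a ≤ b)
    (ft Ft : ℝ → ℂ) (hcont : ContinuousOn ft (Icc a b))
    (hprim : ∀ t ∈ Icc a b, HasDerivWithinAt Ft (ft t) (Icc a b) t) (hFa : Ft a = 0)
    (f : ℝ → ℝ → ℂ) (hf : ∀ t s, f t s = ft t * (Heaviside (t - s) : ℝ))
    (v : ℂ) (u : ℝ → ℂ) (hua : u a = v)
    (hu : ∀ t ∈ Icc a b, HasDerivWithinAt u (ft t * u t) (Icc a b) t) :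
    ∀ t ∈ Icc a b,
      u t = Complex.exp (Ft t - Ft a) * v ∧
      u t = ((Heaviside (t - a) : ℝ)
              + ∑' n : ℕ, starProd a b thetaK (starPow a b f n) t a) * v := by
  have hFtc : ContinuousOn Ft (Icc a b) := fun x hx => (hprim x hx).continuousWithinAt
  -- Part 1 : u t = exp (Ft t) * v on [a,b]
  have hg : ∀ x ∈ Icc a b,
      HasDerivWithinAt (fun τ => Complex.exp (-Ft τ) * u τ) 0 (Icc a b) x := by
    intro x hx
    have h1 : HasDerivWithinAt (fun τ => Complex.exp (-Ft τ))
        (-ft x * Complex.exp (-Ft x)) (Icc a b) x := by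
      have := (Complex.hasDerivAt_exp (-Ft x)).comp_hasDerivWithinAt x ((hprim x hx).neg)
      convert this using 1; rfl; rfl; ring
    have := h1.mul (hu x hx)
    convert this using 1; rfl; rfl; ring
  have hconst : ∀ x ∈ Icc a b, Complex.exp (-Ft x) * u x = Complex.exp (-Ft a) * u a := by
    apply constant_of_has_deriv_right_zero
    · exact fun x hx => (hg x hx).continuousWithinAt
    · intro x hx
      exact (hg x ⟨hx.1, hx.2.le⟩).mono_of_mem_nhdsWithin (Icc_mem_nhdsGE_of_mem hx)
  have key : ∀ t ∈ Icc a b, u t = Complex.exp (Ft t) * v := by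
    intro t ht
    have h := hconst t ht
    rw [hFa, hua, neg_zero, Complex.exp_zero, one_mul] at h
    calc u t = Complex.exp (Ft t) * (Complex.exp (-Ft t) * u t) := by
          rw [← mul_assoc, ← Complex.exp_add]; simp
      _ = Complex.exp (Ft t) * v := by rw [h]
  -- FTC computation
  have hFTC : ∀ (n : ℕ), ∀ t ∈ Icc a b,
      ∫ τ in a..t, ft τ * Ft τ ^ n = Ft t ^ (n + 1) / (n + 1) := by
    intro n t ht
    have hne : ((n : ℂ) + 1) ≠ 0 := Nat.cast_add_one_ne_zero n
    have hsub : Icc a t ⊆ Icc a b := Icc_subset_Icc le_rfl ht.2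
    have hres : ∫ τ in a..t, ft τ * Ft τ ^ n
        = Ft t ^ (n + 1) / (n + 1) - Ft a ^ (n + 1) / (n + 1) := by
      apply intervalIntegral.integral_eq_sub_of_hasDeriv_right_of_le ht.1
      · exact ((hFtc.mono hsub).pow (n + 1)).div_const _
      · intro x hx
        have hx' : x ∈ Icc a b := ⟨hx.1.le, hx.2.le.trans ht.2⟩
        have h0 := (hasDerivAt_pow (n + 1) (Ft x)).comp_hasDerivWithinAt x (hprim x hx')
        have h1 := h0.div_const ((n : ℂ) + 1)
        have h2 : HasDerivWithinAt (fun τ => Ft τ ^ (n + 1) / ((n : ℂ) + 1))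
            (ft x * Ft x ^ n) (Icc a b) x := by
          convert h1 using 1
          rfl
          rfl
          rw [Nat.add_sub_cancel]; push_cast
          field_simp
        apply h2.mono_of_mem_nhdsWithin
        exact mem_nhdsWithin_of_mem_nhds (Icc_mem_nhds hx.1 (hx.2.trans_le ht.2))
      · exact ((hcont.mono hsub).mul ((hFtc.mono hsub).pow n)).intervalIntegrable_of_Icc ht.1
    rw [hres, hFa, zero_pow (Nat.succ_ne_zero n), zero_div, sub_zero]
  -- starPow evaluation
  have hpow : ∀ (n : ℕ), ∀ t ∈ Icc a b,
      starPow a b f n t a = ft t * Ft t ^ n / (n.factorial : ℂ) := by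
    intro n
    induction n with
    | zero =>
      intro t ht
      have : Heaviside (t - a) = 1 := by simp [Heaviside, sub_nonneg.mpr ht.1]
      simp [starPow, hf, this]
    | succ n ih =>
      intro t ht
      have hcong : ∀ τ ∈ Icc a b,
          f t τ * starPow a b f n τ a
            = ft t * (((Heaviside (t - τ) : ℝ) : ℂ) * (ft τ * Ft τ ^ n / (n.factorial : ℂ))) := by
        intro τ hτ
        rw [hf, ih τ hτ]; ring
      have h1 : starPow a b f (n + 1) t a
          = ∫ τ in a..b, ft t * (((Heaviside (t - τ) : ℝ) : ℂ)
              * (ft τ * Ft τ ^ n / (n.factorial : ℂ))) := by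
        show (∫ τ in a..b, f t τ * starPow a b f n τ a) = _
        apply intervalIntegral.integral_congr
        intro τ hτ
        rw [uIcc_of_le hab] at hτ
        exact hcong τ hτ
      rw [h1, intervalIntegral.integral_const_mul,
        heaviside_integral a b t ht (fun τ => ft τ * Ft τ ^ n / (n.factorial : ℂ))]
      have h2 : ∫ τ in a..t, ft τ * Ft τ ^ n / (n.factorial : ℂ)
          = (∫ τ in a..t, ft τ * Ft τ ^ n) / (n.factorial : ℂ) :=
        intervalIntegral.integral_div _ _
      rw [h2, hFTC n t ht]
      rw [Nat.factorial_succ]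
      push_cast
      have hfne : ((n.factorial : ℂ)) ≠ 0 := by exact_mod_cast Nat.factorial_ne_zero n
      have hne : ((n : ℂ) + 1) ≠ 0 := Nat.cast_add_one_ne_zero n
      field_simp
      try ring
  -- Θ ★ f^{★(n+1)} evaluation
  intro t ht
  have hkey := key t ht
  have hterm : ∀ n : ℕ, starProd a b thetaK (starPow a b f n) t a
      = Ft t ^ (n + 1) / ((n + 1).factorial : ℂ) := by
    intro n
    have h1 : starProd a b thetaK (starPow a b f n) t a
        = ∫ τ in a..b, ((Heaviside (t - τ) : ℝ) : ℂ)
            * (ft τ * Ft τ ^ n / (n.factorial : ℂ)) := by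
      show (∫ τ in a..b, thetaK t τ * starPow a b f n τ a) = _
      apply intervalIntegral.integral_congr
      intro τ hτ
      rw [uIcc_of_le hab] at hτ
      simp only [thetaK]
      rw [hpow n τ hτ]
    rw [h1, heaviside_integral a b t ht (fun τ => ft τ * Ft τ ^ n / (n.factorial : ℂ)),
      intervalIntegral.integral_div, hFTC n t ht, Nat.factorial_succ]
    push_cast
    have hfne : ((n.factorial : ℂ)) ≠ 0 := by exact_mod_cast Nat.factorial_ne_zero n
    have hne : ((n : ℂ) + 1) ≠ 0 := Nat.cast_add_one_ne_zero n
    field_simp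
    try ring
  -- sum the series
  have hsum : Summable (fun n : ℕ => Ft t ^ n / (n.factorial : ℂ)) :=
    NormedSpace.expSeries_div_summable (Ft t)
  have hexp : Complex.exp (Ft t) = ∑' n : ℕ, Ft t ^ n / (n.factorial : ℂ) := by
    rw [Complex.exp_eq_exp_ℂ, NormedSpace.exp_eq_tsum_div]
  have hshift : (∑' n : ℕ, Ft t ^ n / (n.factorial : ℂ))
      = 1 + ∑' n : ℕ, Ft t ^ (n + 1) / ((n + 1).factorial : ℂ) := by
    rw [Summable.tsum_eq_zero_add hsum]
    simp
  have hth : ((Heaviside (t - a) : ℝ) : ℂ) = 1 := by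
    simp [Heaviside, sub_nonneg.mpr ht.1]
  constructor
  · rw [hkey, hFa, sub_zero]
  · rw [hkey]
    congr 1
    rw [tsum_congr hterm, hth, hexp, hshift]
end

section
/- Let λ̃ : [a,b] → ℝ be continuous with primitive L(τ,s) = ∫ₛᵗ λ̃ (i.e., L(τ,s) = ∫ₛ^τ λ̃(σ)dσ), λ(t,s) = λ̃(t)Θ(t−s). Then for any scalars α_0,…,α_n and s ∈ [a,b), ‖R^★(λ) − ∑_{k=0}^n α_k λ^{★k}‖_★(s)² = ∫ₛᵇ |exp(L(τ,s)) − ∑_{k=0}^n α_k L(τ,s)^k/k!|² dτ, where the ★-norm of a scalar kernel f is ‖f‖_★(s)² = ∫ₛᵇ |F̃(τ,s)|²dτ with Θ★f = F̃Θ. -/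
open MeasureTheory Set

/-- The kernel `λ(t,s) = λ̃(t)Θ(t-s)` of an eigencurve. -/
noncomputable def lamKernel (lam : ℝ → ℝ) : ℝ → ℝ → ℂ :=
  fun t s => (lam t : ℂ) * (Heaviside (t - s) : ℝ)

/-- `Θ ★ R^★(λ)`, with `R^★(λ) = ∑_{k≥0} λ^{★k}` (the `k = 0` term `δ` contributes
`Θ ★ δ = Θ`); here `starPow _ _ _ k = λ^{★(k+1)}`. -/
noncomputable def thetaResolvent (a b : ℝ) (lam : ℝ → ℝ) : ℝ → ℝ → ℂ :=
  fun t s => (Heaviside (t - s) : ℝ)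
    + ∑' k : ℕ, starProd a b thetaK (starPow a b (lamKernel lam) k) t s

/-- `Θ ★ p^★(λ)` for the `★`-polynomial `p^★(x) = ∑_{k=0}^n α_k x^{★k}`. -/
noncomputable def thetaStarPoly (a b : ℝ) (lam : ℝ → ℝ) (α : ℕ → ℂ) (n : ℕ) :
    ℝ → ℝ → ℂ :=
  fun t s => α 0 * (Heaviside (t - s) : ℝ)
    + ∑ k ∈ Finset.range n, α (k + 1) * starProd a b thetaK (starPow a b (lamKernel lam) k) t s

lemma integral_heaviside_pair {a b s t : ℝ} (hab : a ≤ b) (hs : s ∈ Icc a b) (ht : t ∈ Icc a b)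
    (g : ℝ → ℂ) :
    (∫ τ in a..b, ((Heaviside (t - τ) : ℝ) : ℂ) * ((Heaviside (τ - s) : ℝ) : ℂ) * g τ)
      = if s ≤ t then ∫ τ in s..t, g τ else 0 := by
  have hind : (fun τ => ((Heaviside (t - τ) : ℝ) : ℂ) * ((Heaviside (τ - s) : ℝ) : ℂ) * g τ)
      = Set.indicator (Icc s t) g := by
    funext τ
    by_cases h1 : τ ∈ Icc s t
    · have h2 : 0 ≤ t - τ := by linarith [h1.2]
      have h3 : 0 ≤ τ - s := by linarith [h1.1]
      simp [Heaviside, h2, h3, Set.indicator_of_mem h1]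
    · rw [Set.indicator_of_notMem h1]
      rcases not_and_or.1 (fun hc => h1 ⟨hc.1, hc.2⟩) with h | h
      · have : ¬ (0 : ℝ) ≤ τ - s := by intro hc; exact h (by linarith)
        simp [Heaviside, this]
      · have : ¬ (0 : ℝ) ≤ t - τ := by intro hc; exact h (by linarith)
        simp [Heaviside, this]
  rw [intervalIntegral.integral_of_le hab]
  simp only [hind]
  rw [MeasureTheory.integral_indicator measurableSet_Icc,
    Measure.restrict_restrict measurableSet_Icc]
  by_cases hst : s ≤ t
  · rw [if_pos hst, intervalIntegral.integral_of_le hst]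
    apply MeasureTheory.setIntegral_congr_set
    rw [MeasureTheory.ae_eq_set]
    constructor
    · refine measure_mono_null ?_ (measure_singleton s)
      rintro τ ⟨⟨⟨h1, h2⟩, _⟩, h3⟩
      have : ¬ (s < τ ∧ τ ≤ t) := fun hc => h3 hc
      rcases not_and_or.1 this with h | h
      · exact le_antisymm (not_lt.1 h) h1
      · exact absurd h2 h
    · have : Ioc s t \ (Icc s t ∩ Ioc a b) = ∅ := by
        ext τ
        simp only [mem_diff, mem_Ioc, mem_inter_iff, mem_Icc, mem_empty_iff_false, iff_false]
        rintro ⟨⟨h1, h2⟩, h3⟩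
        exact h3 ⟨⟨h1.le, h2⟩, lt_of_le_of_lt hs.1 h1, h2.trans ht.2⟩
      rw [this, measure_empty]
  · rw [if_neg hst, Icc_eq_empty hst]
    simp

lemma ftc_pow_s14 (lam' : ℝ → ℝ) (hc : Continuous lam') (s : ℝ) (k : ℕ) (t : ℝ) :
    (∫ τ in s..t, (lam' τ : ℂ) * (((∫ σ in s..τ, lam' σ : ℝ) : ℂ) ^ k / (k.factorial : ℂ)))
      = ((∫ σ in s..t, lam' σ : ℝ) : ℂ) ^ (k + 1) / ((k + 1).factorial : ℂ) := by
  set L : ℝ → ℝ := fun u => ∫ σ in s..u, lam' σ with hLdef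
  have hL : ∀ τ : ℝ, HasDerivAt L (lam' τ) τ := fun τ =>
    intervalIntegral.integral_hasDerivAt_right (hc.intervalIntegrable _ _)
      hc.stronglyMeasurable.stronglyMeasurableAtFilter hc.continuousAt
  have hLc : Continuous L := by
    rw [continuous_iff_continuousAt]; exact fun τ => (hL τ).continuousAt
  have hfac : ((k + 1).factorial : ℂ) ≠ 0 := Nat.cast_ne_zero.2 (Nat.factorial_ne_zero _)
  have hfac' : ((k : ℂ) + 1) * (k.factorial : ℂ) ≠ 0 := by
    push_cast [← Nat.factorial_succ] at hfac ⊢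
    exact_mod_cast hfac
  have hF : ∀ τ : ℝ, HasDerivAt (fun u => ((L u : ℂ)) ^ (k + 1) / ((k + 1).factorial : ℂ))
      ((lam' τ : ℂ) * (((L τ : ℝ) : ℂ) ^ k / (k.factorial : ℂ))) τ := by
    intro τ
    have h1 : HasDerivAt (fun u => ((L u : ℝ) : ℂ)) (lam' τ : ℂ) τ := (hL τ).ofReal_comp
    have hp : HasDerivAt (fun z : ℂ => z ^ (k + 1))
        (((k : ℂ) + 1) * ((L τ : ℝ) : ℂ) ^ k) ((L τ : ℝ) : ℂ) := by
      simpa using hasDerivAt_pow (k + 1) ((L τ : ℝ) : ℂ)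
    have h2 := ((hp.comp τ h1).div_const ((k + 1).factorial : ℂ))
    refine h2.congr_deriv ?_
    symm
    rw [Nat.factorial_succ]
    have hk0 : (k.factorial : ℂ) ≠ 0 := Nat.cast_ne_zero.2 (Nat.factorial_ne_zero _)
    have hk1 : ((k : ℂ) + 1) ≠ 0 := Nat.cast_add_one_ne_zero k
    push_cast
    rw [mul_assoc, mul_div_mul_left _ _ hk1, mul_comm (((L τ : ℝ) : ℂ) ^ k), mul_div_assoc]
  rw [intervalIntegral.integral_eq_sub_of_hasDerivAt (fun τ _ => hF τ)
    (((Complex.continuous_ofReal.comp hc).mul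
      (((Complex.continuous_ofReal.comp hLc).pow k).div_const _)).intervalIntegrable _ _)]
  have : L s = 0 := intervalIntegral.integral_same
  simp [this, hLdef]

lemma starPow_eq_s14 (a b : ℝ) (hab : a ≤ b) (lam lam' : ℝ → ℝ) (hc : Continuous lam')
    (heq : EqOn lam lam' (Icc a b)) (s : ℝ) (hs : s ∈ Icc a b) :
    ∀ k : ℕ, ∀ t ∈ Icc a b, starPow a b (lamKernel lam) k t s
      = (lam' t : ℂ) * ((Heaviside (t - s) : ℝ) : ℂ)
          * (((∫ σ in s..t, lam' σ : ℝ) : ℂ) ^ k / (k.factorial : ℂ)) := by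
  intro k
  induction k with
  | zero =>
    intro t ht
    simp [starPow, lamKernel, heq ht]
  | succ k ih =>
    intro t ht
    have hstep : starPow a b (lamKernel lam) (k + 1) t s
        = ∫ τ in a..b, lamKernel lam t τ * starPow a b (lamKernel lam) k τ s := rfl
    rw [hstep]
    have hcongr : EqOn (fun τ => lamKernel lam t τ * starPow a b (lamKernel lam) k τ s)
        (fun τ => (lam' t : ℂ) * (((Heaviside (t - τ) : ℝ) : ℂ) * ((Heaviside (τ - s) : ℝ) : ℂ)
          * ((lam' τ : ℂ) * (((∫ σ in s..τ, lam' σ : ℝ) : ℂ) ^ k / (k.factorial : ℂ)))))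
        (Set.uIcc a b) := by
      intro τ hτ
      rw [Set.uIcc_of_le hab] at hτ
      simp only [lamKernel, ih τ hτ, heq ht]
      ring
    rw [intervalIntegral.integral_congr hcongr, intervalIntegral.integral_const_mul,
      integral_heaviside_pair hab hs ht]
    by_cases hst : s ≤ t
    · rw [if_pos hst, ftc_pow_s14 lam' hc s k t]
      have hθ : Heaviside (t - s) = 1 := if_pos (by linarith)
      rw [hθ]
      push_cast
      ring
    · rw [if_neg hst]
      have hθ : Heaviside (t - s) = 0 := if_neg (by intro h; exact hst (by linarith))
      rw [hθ]
      push_cast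
      ring

lemma theta_starPow_eq_s14 (a b : ℝ) (hab : a ≤ b) (lam lam' : ℝ → ℝ) (hc : Continuous lam')
    (heq : EqOn lam lam' (Icc a b)) (s : ℝ) (hs : s ∈ Icc a b) (k : ℕ)
    (t : ℝ) (ht : t ∈ Icc a b) :
    starProd a b thetaK (starPow a b (lamKernel lam) k) t s
      = ((Heaviside (t - s) : ℝ) : ℂ)
          * (((∫ σ in s..t, lam' σ : ℝ) : ℂ) ^ (k + 1) / ((k + 1).factorial : ℂ)) := by
  have hstep : starProd a b thetaK (starPow a b (lamKernel lam) k) t s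
      = ∫ τ in a..b, thetaK t τ * starPow a b (lamKernel lam) k τ s := rfl
  rw [hstep]
  have hcongr : EqOn (fun τ => thetaK t τ * starPow a b (lamKernel lam) k τ s)
      (fun τ => ((Heaviside (t - τ) : ℝ) : ℂ) * ((Heaviside (τ - s) : ℝ) : ℂ)
        * ((lam' τ : ℂ) * (((∫ σ in s..τ, lam' σ : ℝ) : ℂ) ^ k / (k.factorial : ℂ))))
      (Set.uIcc a b) := by
    intro τ hτ
    rw [Set.uIcc_of_le hab] at hτ
    simp only [thetaK, starPow_eq_s14 a b hab lam lam' hc heq s hs k τ hτ]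
    ring
  rw [intervalIntegral.integral_congr hcongr, integral_heaviside_pair hab hs ht]
  by_cases hst : s ≤ t
  · rw [if_pos hst, ftc_pow_s14 lam' hc s k t]
    have hθ : Heaviside (t - s) = 1 := if_pos (by linarith)
    rw [hθ]
    push_cast
    ring
  · rw [if_neg hst]
    have hθ : Heaviside (t - s) = 0 := if_neg (by intro h; exact hst (by linarith))
    rw [hθ]
    push_cast
    ring

lemma tsum_pow_succ_div_factorial (z : ℂ) :
    ∑' k : ℕ, z ^ (k + 1) / ((k + 1).factorial : ℂ) = Complex.exp z - 1 := by
  have hs : Summable (fun n : ℕ => z ^ n / (n.factorial : ℂ)) :=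
    NormedSpace.expSeries_div_summable z
  have he : Complex.exp z = ∑' n : ℕ, z ^ n / (n.factorial : ℂ) := by
    rw [Complex.exp_eq_exp_ℂ, NormedSpace.exp_eq_tsum_div]
  rw [he, Summable.tsum_eq_zero_add hs]
  simp

/-- Key identity in the proof of Theorem 2.1: the `★`-norm of the `★`-polynomial
approximation error of the `★`-resolvent `R^★(λ)` equals the `L²` error of the
ordinary polynomial `p(t) = ∑ (α_k/k!) t^k` approximating the exponential along the
eigencurve primitive `L(τ,s) = ∫_s^τ λ̃`:
`‖R^★(λ) - ∑_{k=0}^n α_k λ^{★k}‖_★(s)² = ∫_s^b |exp(L(τ,s)) - ∑ α_k L(τ,s)^k/k!|² dτ`. -/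
theorem starNorm_resolvent_error_eq_exp_poly_error (a b : ℝ) (hab : a ≤ b)
    (lam : ℝ → ℝ) (hlam : ContinuousOn lam (Icc a b))
    (α : ℕ → ℂ) (n : ℕ) :
    ∀ s ∈ Ico a b,
      (∫ τ in s..b, norm
          (thetaResolvent a b lam τ s - thetaStarPoly a b lam α n τ s) ^ 2)
        = ∫ τ in s..b, norm
            ((Real.exp (∫ σ in s..τ, lam σ) : ℂ)
              - ∑ k ∈ Finset.range (n + 1),
                  α k * ((∫ σ in s..τ, lam σ : ℝ) : ℂ) ^ k / (Nat.factorial k : ℂ)) ^ 2 := by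
  intro s hs
  obtain ⟨hsa, hsb⟩ := hs
  have hsb' : s ≤ b := hsb.le
  have hs' : s ∈ Icc a b := ⟨hsa, hsb'⟩
  set lam' : ℝ → ℝ := fun t => lam ((projIcc a b hab t : Icc a b) : ℝ) with hl'
  have hc : Continuous lam' := hlam.comp_continuous
    (continuous_subtype_val.comp continuous_projIcc) (fun x => (projIcc a b hab x).2)
  have heq : EqOn lam lam' (Icc a b) := fun t ht => by
    simp [hl', projIcc_of_mem hab ht]
  apply intervalIntegral.integral_congr
  intro τ hτ
  rw [Set.uIcc_of_le hsb'] at hτ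
  have hτab : τ ∈ Icc a b := ⟨hsa.trans hτ.1, hτ.2⟩
  have hLτ : (∫ σ in s..τ, lam σ) = ∫ σ in s..τ, lam' σ := by
    apply intervalIntegral.integral_congr
    intro σ hσ
    rw [Set.uIcc_of_le hτ.1] at hσ
    exact heq ⟨hsa.trans hσ.1, hσ.2.trans hτab.2⟩
  have hθ : Heaviside (τ - s) = 1 := if_pos (by linarith [hτ.1])
  set z : ℂ := ((∫ σ in s..τ, lam' σ : ℝ) : ℂ) with hz
  have hres : thetaResolvent a b lam τ s = Complex.exp z := by
    unfold thetaResolvent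
    rw [tsum_congr (fun k => theta_starPow_eq_s14 a b hab lam lam' hc heq s hs' k τ hτab)]
    simp only [hθ, Complex.ofReal_one, one_mul, ← hz]
    rw [tsum_pow_succ_div_factorial z]
    ring
  have hpoly : thetaStarPoly a b lam α n τ s
      = ∑ k ∈ Finset.range (n + 1), α k * z ^ k / (k.factorial : ℂ) := by
    unfold thetaStarPoly
    rw [Finset.sum_range_succ']
    simp only [theta_starPow_eq_s14 a b hab lam lam' hc heq s hs' _ τ hτab, hθ,
      Complex.ofReal_one, one_mul, ← hz]
    rw [add_comm]
    congr 1
    · exact Finset.sum_congr rfl fun k _ => by ring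
    · simp
  simp only [hres, hpoly, hLτ, ← hz, Complex.ofReal_exp]
end
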